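/- Let C ≥ 1 and suppose that for every integer n ≥ 3 there exists a symmetric nonnegative edge-weight function W_n on the finite grid graph Grid_n such that for all u, v ∈ {0,…,n−1}²: ‖u−v‖₂ − 1 ≤ dist_{W_n}(u,v) ≤ ‖u−v‖₂ + C·(1 + ‖u−v‖₂^(8/9)). Then there exist a constant C′ > 0 and a symmetric nonnegative edge-weight function W on the infinite grid graph Grid such that for all u, v ∈ ℤ²: ‖u−v‖₂ − 1 ≤ dist_W(u,v) ≤ ‖u−v‖₂ + C′·(1 + ‖u−v‖₂^(8/9)). -/

import Mathlib

/-- Vertices of the grid graph: integer points of the plane. -/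
abbrev V : Type := ℤ × ℤ

/-- Adjacency in the grid graph: `u` and `v` are joined iff `‖u - v‖₁ = 1`. -/
def gridAdj (u v : V) : Prop := |u.1 - v.1| + |u.2 - v.2| = 1

/-- Euclidean distance between two integer points. -/
noncomputable def euclid (u v : V) : ℝ :=
  Real.sqrt (((u.1 : ℝ) - (v.1 : ℝ)) ^ 2 + ((u.2 : ℝ) - (v.2 : ℝ)) ^ 2)

/-- The weight of a walk (list of vertices): the sum of `w` over consecutive pairs. -/
noncomputable def walkWeight (w : V → V → ℝ) (p : List V) : ℝ :=
  (List.zipWith w p p.tail).sum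

/-- `p` is a walk in the grid graph from `u` to `v`. -/
def IsWalk (u v : V) (p : List V) : Prop :=
  p.Chain' gridAdj ∧ p.head? = some u ∧ p.getLast? = some v

/-- Weighted graph distance in the grid graph: the infimum of weights of walks. -/
noncomputable def gridDist (w : V → V → ℝ) (u v : V) : ℝ :=
  sInf { c | ∃ p : List V, IsWalk u v p ∧ c = walkWeight w p }

/-- The vertex set `{0, …, n-1}²` of the finite grid graph `Grid_n`. -/
def box (n : ℕ) : Set V := {v | 0 ≤ v.1 ∧ v.1 < n ∧ 0 ≤ v.2 ∧ v.2 < n}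

/-- Weighted graph distance in the grid graph restricted to a vertex set `S`:
the infimum of weights of walks all of whose vertices lie in `S`. -/
noncomputable def gridDistOn (S : Set V) (w : V → V → ℝ) (u v : V) : ℝ :=
  sInf { c | ∃ p : List V, IsWalk u v p ∧ (∀ x ∈ p, x ∈ S) ∧ c = walkWeight w p }

/-- If `C ≥ 1` and every finite grid `Grid_n` (`n ≥ 3`) admits a
symmetric nonnegative weight function `W_n` with
`‖u-v‖₂ - 1 ≤ dist_{W_n} u v ≤ ‖u-v‖₂ + C·(1 + ‖u-v‖₂^(8/9))`, then the infinite
grid admits a symmetric nonnegative weight function `W` with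
`‖u-v‖₂ - 1 ≤ dist_W u v ≤ ‖u-v‖₂ + C'·(1 + ‖u-v‖₂^(8/9))` for some constant
`C' > 0`. -/
/- ### wgt -/
noncomputable def wgt (w : V → V → ℝ) : List V → ℝ
  | [] => 0
  | [_] => 0
  | a :: b :: l => w a b + wgt w (b :: l)

lemma walkWeight_eq_wgt (w : V → V → ℝ) : ∀ p, walkWeight w p = wgt w p
  | [] => by simp [walkWeight, wgt]
  | [a] => by simp [walkWeight, wgt]
  | a :: b :: l => by
    have := walkWeight_eq_wgt w (b :: l)
    simp only [walkWeight, wgt, List.tail_cons, List.zipWith_cons_cons, List.sum_cons] at *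
    rw [this]

lemma wgt_nonneg {w : V → V → ℝ} (hw : ∀ a b, 0 ≤ w a b) : ∀ p, 0 ≤ wgt w p
  | [] => le_refl _
  | [_] => le_refl _
  | a :: b :: l => add_nonneg (hw a b) (wgt_nonneg hw (b :: l))

lemma wgt_append (w : V → V → ℝ) (a : V) (q : List V) :
    ∀ p, wgt w (p ++ a :: q) = wgt w (p ++ [a]) + wgt w (a :: q)
  | [] => by simp [wgt]
  | [b] => by simp [wgt]
  | b :: c :: p => by
    have := wgt_append w a q (c :: p)
    simp only [List.cons_append, wgt, List.append_eq] at *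
    rw [this]; ring

lemma wgt_reverse {w : V → V → ℝ} (hw : ∀ a b, w a b = w b a) :
    ∀ p, wgt w p.reverse = wgt w p
  | [] => rfl
  | [_] => rfl
  | a :: b :: l => by
    have ih := wgt_reverse hw (b :: l)
    rw [show ((a :: b :: l).reverse : List V) = l.reverse ++ b :: [a] by simp]
    rw [wgt_append w b [a] l.reverse]
    have h2 : (l.reverse ++ [b] : List V) = (b :: l).reverse := by simp
    rw [h2, ih]
    simp only [wgt, hw a b]
    ring

lemma wgt_mono {w w' : V → V → ℝ} {S : Set V}
    (hw : ∀ a b, a ∈ S → b ∈ S → gridAdj a b → w a b ≤ w' a b) :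
    ∀ p, p.Chain' gridAdj → (∀ x ∈ p, x ∈ S) → wgt w p ≤ wgt w' p
  | [], _, _ => le_refl _
  | [_], _, _ => le_refl _
  | a :: b :: l, hc, hS => by
    have hc' := (List.isChain_cons.1 hc)
    have hab : gridAdj a b := by
      have := hc'.1 b; simp at this; exact this
    have := wgt_mono hw (b :: l) hc'.2 (fun x hx => hS x (List.mem_cons_of_mem a hx))
    simp only [wgt]
    exact add_le_add (hw a b (hS a (by simp)) (hS b (by simp)) hab) this

/- ### walk basics -/
lemma IsWalk.ne_nil {u v : V} {p : List V} (h : IsWalk u v p) : p ≠ [] := by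
  intro hp; rw [hp] at h; simp [IsWalk] at h

lemma gridAdj_symm {a b : V} (h : gridAdj a b) : gridAdj b a := by
  simp only [gridAdj, abs_sub_comm b.1 a.1, abs_sub_comm b.2 a.2]; exact h

lemma IsWalk.reverse {u v : V} {p : List V} (h : IsWalk u v p) : IsWalk v u p.reverse := by
  obtain ⟨hc, hh, hl⟩ := h
  refine ⟨?_, ?_, ?_⟩
  · unfold List.Chain'; rw [List.isChain_reverse]
    exact hc.imp (fun {a b} hab => gridAdj_symm hab)
  · rw [List.head?_reverse]; exact hl
  · rw [List.getLast?_reverse]; exact hh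

lemma IsWalk.trans {w : V → V → ℝ} {u x v : V} {p q : List V} (hp : IsWalk u x p) (hq : IsWalk x v q) :
    IsWalk u v (p ++ q.tail) ∧ wgt w (p ++ q.tail) = wgt w p + wgt w q := by
  obtain ⟨hc, hh, hl⟩ := hp
  obtain ⟨hc', hh', hl'⟩ := hq
  obtain ⟨q', rfl⟩ : ∃ q', q = x :: q' := by
    cases q with
    | nil => simp at hh'
    | cons a q' => simp at hh'; exact ⟨q', by rw [hh']⟩
  obtain ⟨p', rfl⟩ : ∃ p', p = p' ++ [x] := by
    have hne : p ≠ [] := by intro hp0; rw [hp0] at hl; simp at hl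
    refine ⟨p.dropLast, ?_⟩
    have := List.dropLast_append_getLast hne
    rw [List.getLast?_eq_getLast hne] at hl
    simp at hl
    rw [hl] at this
    exact this.symm
  cases q' with
  | nil =>
    simp only [List.tail_cons, List.append_nil]
    have hxv : x = v := by simp at hl'; exact hl'
    subst hxv
    exact ⟨⟨hc, hh, hl⟩, by simp [wgt]⟩
  | cons b q'' =>
    simp only [List.tail_cons]
    constructor
    · refine ⟨?_, ?_, ?_⟩
      · unfold List.Chain'; rw [List.isChain_append]
        refine ⟨hc, (List.isChain_cons.1 hc').2, ?_⟩
        intro y hy z hz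
        rw [hl] at hy; simp at hy hz
        subst hy; subst hz
        have := (List.isChain_cons.1 hc').1 b (by simp)
        exact this
      · rw [List.head?_append_of_ne_nil (p' ++ [x]) (by simp)]
        exact hh
      · rw [List.getLast?_append]
        simp only [List.getLast?_cons_cons] at hl'
        rw [hl']; rfl
    · rw [show (p' ++ [x] ++ b :: q'' : List V) = p' ++ x :: (b :: q'') by simp]
      rw [wgt_append]

/- ### splitting a walk at a vertex -/
lemma walk_split {u v x : V} {p1 p2 : List V} (h : IsWalk u v (p1 ++ x :: p2)) :
    IsWalk u x (p1 ++ [x]) ∧ IsWalk x v (x :: p2) := by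
  obtain ⟨hc, hh, hl⟩ := h
  rw [show (p1 ++ x :: p2 : List V) = (p1 ++ [x]) ++ p2 by simp] at hc hh hl
  have hcs := List.isChain_append.1 hc
  constructor
  · refine ⟨hcs.1, ?_, by simp⟩
    cases p1 with
    | nil => simpa using hh
    | cons a l => simpa using hh
  · refine ⟨?_, by simp, ?_⟩
    · unfold List.Chain'; rw [List.isChain_cons]
      refine ⟨?_, hcs.2.1⟩
      intro y hy
      exact hcs.2.2 x (by simp) y hy
    · rw [List.getLast?_append] at hl
      cases p2 with
      | nil =>
        simp at hl
        simp [hl]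
      | cons b l =>
        rw [List.getLast?_eq_getLast (l := b :: l) (by simp)] at hl
        simp only [Option.some_or] at hl
        rw [List.getLast?_cons_cons, List.getLast?_eq_getLast (l := b :: l) (by simp), hl]

/- weight of walk visiting x is at least dist u x + dist x v -/
lemma wgt_split {w : V → V → ℝ} {x : V} {p1 p2 : List V} :
    wgt w (p1 ++ x :: p2) = wgt w (p1 ++ [x]) + wgt w (x :: p2) := wgt_append w x p2 p1

/- ### decomposition of non-nodup lists -/
lemma exists_dup_decomp : ∀ (p : List V), ¬ p.Nodup →
    ∃ (x : V) (l1 l2 l3 : List V), p = l1 ++ x :: (l2 ++ x :: l3)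
  | [], h => by simp at h
  | a :: l, h => by
    rw [List.nodup_cons] at h
    by_cases ha : a ∈ l
    · obtain ⟨s, t, rfl⟩ := List.append_of_mem ha
      exact ⟨a, [], s, t, by simp⟩
    · have hl : ¬ l.Nodup := by tauto
      obtain ⟨x, l1, l2, l3, rfl⟩ := exists_dup_decomp l hl
      exact ⟨x, a :: l1, l2, l3, by simp⟩

/- ### loop erasure -/
lemma loop_erase {w : V → V → ℝ} (hw : ∀ a b, 0 ≤ w a b) :
    ∀ (N : ℕ) (p : List V) (u v : V), p.length ≤ N → IsWalk u v p →
    ∃ q, IsWalk u v q ∧ q.Nodup ∧ (∀ x ∈ q, x ∈ p) ∧ wgt w q ≤ wgt w p := by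
  intro N
  induction N with
  | zero => intro p u v hlen hp; exact absurd (List.length_eq_zero_iff.1 (Nat.le_zero.1 hlen)) hp.ne_nil
  | succ N ih =>
    intro p u v hlen hp
    by_cases hnd : p.Nodup
    · exact ⟨p, hp, hnd, fun x hx => hx, le_refl _⟩
    · obtain ⟨x, l1, l2, l3, rfl⟩ := exists_dup_decomp p hnd
      have hs1 := walk_split hp
      have hs2 := walk_split (p1 := x :: l2) (p2 := l3) (by simpa using hs1.2)
      have htr := IsWalk.trans (w := w) hs1.1 hs2.2
      simp only [List.tail_cons] at htr
      have hlist : (l1 ++ [x]) ++ l3 = l1 ++ x :: l3 := by simp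
      rw [hlist] at htr
      have hlen' : (l1 ++ x :: l3).length ≤ N := by
        simp only [List.length_append, List.length_cons] at hlen ⊢
        omega
      obtain ⟨q, hq, hqnd, hqmem, hqw⟩ := ih (l1 ++ x :: l3) u v hlen' htr.1
      refine ⟨q, hq, hqnd, ?_, ?_⟩
      · intro y hy
        have := hqmem y hy
        simp only [List.mem_append, List.mem_cons] at this ⊢
        tauto
      · refine hqw.trans ?_
        rw [htr.2]
        rw [wgt_split (x := x) (p1 := l1) (p2 := l2 ++ x :: l3)]
        rw [show (x :: (l2 ++ x :: l3) : List V) = (x :: l2) ++ x :: l3 by simp]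
        rw [wgt_split (x := x) (p1 := x :: l2) (p2 := l3)]
        have h0 : 0 ≤ wgt w ((x :: l2) ++ [x]) := wgt_nonneg hw _
        linarith

/- ### existence of staircase walks -/
lemma walk_cons {u u' v : V} {p : List V} (h : IsWalk u' v p) (ha : gridAdj u u') :
    IsWalk u v (u :: p) := by
  obtain ⟨hc, hh, hl⟩ := h
  obtain ⟨t, rfl⟩ : ∃ t, p = u' :: t := by
    cases p with
    | nil => simp at hh
    | cons a t => simp at hh; exact ⟨t, by rw [hh]⟩
  exact ⟨List.isChain_cons.2 ⟨fun y hy => by simp at hy; rw [← hy]; exact ha, hc⟩,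
    by simp, by rw [List.getLast?_cons_cons]; exact hl⟩

def inRect (u v x : V) : Prop :=
  min u.1 v.1 ≤ x.1 ∧ x.1 ≤ max u.1 v.1 ∧ min u.2 v.2 ≤ x.2 ∧ x.2 ≤ max u.2 v.2

lemma exists_walk_rect_aux : ∀ N : ℕ, ∀ u v : V,
    (u.1 - v.1).natAbs + (u.2 - v.2).natAbs ≤ N →
    ∃ p, IsWalk u v p ∧ ∀ x ∈ p, inRect u v x := by
  intro N
  induction N with
  | zero =>
    intro u v hN
    have h1 : u.1 = v.1 := by omega
    have h2 : u.2 = v.2 := by omega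
    have huv : u = v := Prod.ext h1 h2
    subst huv
    exact ⟨[u], ⟨List.isChain_singleton u, rfl, rfl⟩,
      fun x hx => by simp at hx; subst hx; exact ⟨by simp, by simp, by simp, by simp⟩⟩
  | succ N ih =>
    intro u v hN
    by_cases h1 : u.1 = v.1
    · by_cases h2 : u.2 = v.2
      · have huv : u = v := Prod.ext h1 h2
        subst huv
        exact ⟨[u], ⟨List.isChain_singleton u, rfl, rfl⟩,
          fun x hx => by simp at hx; subst hx; exact ⟨by simp, by simp, by simp, by simp⟩⟩
      · rcases lt_or_gt_of_ne h2 with hlt | hgt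
        · set u' : V := (u.1, u.2 + 1) with hu'
          obtain ⟨p, hp, hr⟩ := ih u' v (by simp [hu']; omega)
          refine ⟨u :: p, walk_cons hp ?_, ?_⟩
          · simp [gridAdj, hu']
          · intro x hx
            rcases List.mem_cons.1 hx with rfl | hx'
            · exact ⟨min_le_left _ _, le_max_left _ _, min_le_left _ _, le_max_left _ _⟩
            · have := hr x hx'
              simp only [inRect, hu'] at this ⊢
              omega
        · set u' : V := (u.1, u.2 - 1) with hu'
          obtain ⟨p, hp, hr⟩ := ih u' v (by simp [hu']; omega)
          refine ⟨u :: p, walk_cons hp ?_, ?_⟩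
          · simp [gridAdj, hu']
          · intro x hx
            rcases List.mem_cons.1 hx with rfl | hx'
            · exact ⟨min_le_left _ _, le_max_left _ _, min_le_left _ _, le_max_left _ _⟩
            · have := hr x hx'
              simp only [inRect, hu'] at this ⊢
              omega
    · rcases lt_or_gt_of_ne h1 with hlt | hgt
      · set u' : V := (u.1 + 1, u.2) with hu'
        obtain ⟨p, hp, hr⟩ := ih u' v (by simp [hu']; omega)
        refine ⟨u :: p, walk_cons hp ?_, ?_⟩
        · simp [gridAdj, hu']
        · intro x hx
          rcases List.mem_cons.1 hx with rfl | hx'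
          · exact ⟨min_le_left _ _, le_max_left _ _, min_le_left _ _, le_max_left _ _⟩
          · have := hr x hx'
            simp only [inRect, hu'] at this ⊢
            omega
      · set u' : V := (u.1 - 1, u.2) with hu'
        obtain ⟨p, hp, hr⟩ := ih u' v (by simp [hu']; omega)
        refine ⟨u :: p, walk_cons hp ?_, ?_⟩
        · simp [gridAdj, hu']
        · intro x hx
          rcases List.mem_cons.1 hx with rfl | hx'
          · exact ⟨min_le_left _ _, le_max_left _ _, min_le_left _ _, le_max_left _ _⟩
          · have := hr x hx'
            simp only [inRect, hu'] at this ⊢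
            omega

lemma exists_walk_rect (u v : V) : ∃ p, IsWalk u v p ∧ ∀ x ∈ p, inRect u v x :=
  exists_walk_rect_aux _ u v le_rfl

/- ### gridDistOn lemmas -/
section DistOn
variable {S : Set V} {w : V → V → ℝ}

def wset (S : Set V) (w : V → V → ℝ) (u v : V) : Set ℝ :=
  { c | ∃ p : List V, IsWalk u v p ∧ (∀ x ∈ p, x ∈ S) ∧ c = walkWeight w p }

lemma gridDistOn_eq : gridDistOn S w u v = sInf (wset S w u v) := rfl

lemma wset_bddBelow (hw : ∀ a b, 0 ≤ w a b) (u v : V) : BddBelow (wset S w u v) := by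
  refine ⟨0, fun c hc => ?_⟩
  obtain ⟨p, _, _, rfl⟩ := hc
  rw [walkWeight_eq_wgt]
  exact wgt_nonneg hw p

lemma gridDistOn_nonneg (hw : ∀ a b, 0 ≤ w a b) (u v : V) : 0 ≤ gridDistOn S w u v := by
  apply Real.sInf_nonneg
  rintro c ⟨p, _, _, rfl⟩
  rw [walkWeight_eq_wgt]
  exact wgt_nonneg hw p

lemma gridDistOn_le (hw : ∀ a b, 0 ≤ w a b) {u v : V} {p : List V}
    (hp : IsWalk u v p) (hS : ∀ x ∈ p, x ∈ S) :
    gridDistOn S w u v ≤ wgt w p :=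
  csInf_le (wset_bddBelow hw u v) ⟨p, hp, hS, (walkWeight_eq_wgt w p).symm⟩

lemma gridDistOn_symm (hsym : ∀ a b, w a b = w b a) (u v : V) :
    gridDistOn S w u v = gridDistOn S w v u := by
  have key : ∀ u v : V, wset S w u v ⊆ wset S w v u := by
    rintro a b c ⟨p, hp, hS, rfl⟩
    refine ⟨p.reverse, hp.reverse, fun x hx => hS x (List.mem_reverse.1 hx), ?_⟩
    rw [walkWeight_eq_wgt, walkWeight_eq_wgt, wgt_reverse hsym]
  rw [gridDistOn_eq, gridDistOn_eq,
    le_antisymm (key u v) (key v u)]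

lemma gridDistOn_triangle (hw : ∀ a b, 0 ≤ w a b) {u x v : V}
    (h1 : (wset S w u x).Nonempty) (h2 : (wset S w x v).Nonempty) :
    gridDistOn S w u v ≤ gridDistOn S w u x + gridDistOn S w x v := by
  apply le_of_forall_pos_le_add
  intro ε hε
  obtain ⟨c1, hc1, hc1'⟩ := exists_lt_of_csInf_lt h1
    (lt_add_of_pos_right _ (half_pos hε) : sInf (wset S w u x) < sInf (wset S w u x) + ε / 2)
  obtain ⟨c2, hc2, hc2'⟩ := exists_lt_of_csInf_lt h2
    (lt_add_of_pos_right _ (half_pos hε) : sInf (wset S w x v) < sInf (wset S w x v) + ε / 2)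
  obtain ⟨p, hp, hpS, rfl⟩ := hc1
  obtain ⟨q, hq, hqS, rfl⟩ := hc2
  have htr := IsWalk.trans (w := w) hp hq
  have hle : gridDistOn S w u v ≤ wgt w (p ++ q.tail) := by
    apply gridDistOn_le hw htr.1
    intro y hy
    rcases List.mem_append.1 hy with hy1 | hy2
    · exact hpS y hy1
    · exact hqS y (List.mem_of_mem_tail hy2)
  rw [htr.2] at hle
  rw [walkWeight_eq_wgt] at hc1' hc2'
  have e1 : gridDistOn S w u x = sInf (wset S w u x) := rfl
  have e2 : gridDistOn S w x v = sInf (wset S w x v) := rfl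
  rw [e1, e2]
  linarith

lemma gridDistOn_chain (hw : ∀ a b, 0 ≤ w a b) :
    ∀ (p : List V) (u v : V), IsWalk u v p → (∀ x ∈ p, x ∈ S) →
    gridDistOn S w u v ≤ wgt (fun a b => gridDistOn S w a b) p
  | [], u, v, hp, _ => absurd rfl hp.ne_nil
  | [a], u, v, hp, hS => by
    obtain ⟨_, hh, hl⟩ := hp
    simp at hh hl
    subst hh; subst hl
    have : gridDistOn S w a a ≤ wgt w [a] :=
      gridDistOn_le hw ⟨List.isChain_singleton a, rfl, rfl⟩ hS
    simpa [wgt] using this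
  | a :: b :: l, u, v, hp, hS => by
    obtain ⟨hc, hh, hl⟩ := hp
    simp only [List.head?_cons, Option.some.injEq] at hh
    subst hh
    have hab : gridAdj a b := (List.isChain_cons.1 hc).1 b (by simp)
    have hwalk2 : IsWalk b v (b :: l) :=
      ⟨(List.isChain_cons.1 hc).2, rfl, by rw [List.getLast?_cons_cons] at hl; exact hl⟩
    have hS2 : ∀ x ∈ b :: l, x ∈ S := fun x hx => hS x (List.mem_cons_of_mem a hx)
    have ih := gridDistOn_chain hw (b :: l) b v hwalk2 hS2
    have hchain2 : List.Chain' gridAdj [a, b] := by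
      simp [List.Chain', List.isChain_cons_cons, hab]
    have hmem2 : ∀ x ∈ ([a, b] : List V), x ∈ S := by
      intro x hx
      rcases List.mem_cons.1 hx with rfl | hx'
      · exact hS x (by simp)
      · simp at hx'; subst hx'; exact hS x (by simp)
    have htri : gridDistOn S w a v ≤ gridDistOn S w a b + gridDistOn S w b v := by
      apply gridDistOn_triangle hw
      · exact ⟨walkWeight w [a, b], [a, b], ⟨hchain2, rfl, rfl⟩, hmem2, rfl⟩
      · exact ⟨walkWeight w (b :: l), b :: l, hwalk2, hS2, rfl⟩
    calc gridDistOn S w a v ≤ gridDistOn S w a b + gridDistOn S w b v := htri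
      _ ≤ gridDistOn S w a b + wgt (fun a b => gridDistOn S w a b) (b :: l) :=
          add_le_add (le_refl _) ih
      _ = wgt (fun a b => gridDistOn S w a b) (a :: b :: l) := by simp [wgt]

end DistOn

/- ### translation and euclid lemmas -/
lemma gridAdj_shift (t a b : V) : gridAdj (a + t) (b + t) ↔ gridAdj a b := by
  unfold gridAdj
  rw [show (a + t).1 - (b + t).1 = a.1 - b.1 by simp,
    show (a + t).2 - (b + t).2 = a.2 - b.2 by simp]

lemma wgt_map (w : V → V → ℝ) (f : V → V) :
    ∀ p : List V, wgt w (p.map f) = wgt (fun a b => w (f a) (f b)) p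
  | [] => rfl
  | [_] => rfl
  | a :: b :: l => by
    have := wgt_map w f (b :: l)
    simp only [List.map_cons, wgt] at *
    rw [this]

lemma IsWalk.shift {u v : V} {p : List V} (t : V) (h : IsWalk u v p) :
    IsWalk (u + t) (v + t) (p.map (· + t)) := by
  obtain ⟨hc, hh, hl⟩ := h
  refine ⟨?_, ?_, ?_⟩
  · unfold List.Chain'; rw [List.isChain_map]
    exact hc.imp (fun {a b} hab => (gridAdj_shift t a b).2 hab)
  · rw [List.head?_map, hh]; rfl
  · rw [List.getLast?_map, hl]; rfl

lemma euclid_nonneg (u v : V) : 0 ≤ euclid u v := Real.sqrt_nonneg _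

lemma euclid_shift (t a b : V) : euclid (a + t) (b + t) = euclid a b := by
  unfold euclid
  congr 1
  push_cast [Prod.fst_add, Prod.snd_add]
  ring

lemma euclid_coord1 (a b : V) : |((a.1 : ℝ) - b.1)| ≤ euclid a b := by
  rw [← Real.sqrt_sq_eq_abs]
  apply Real.sqrt_le_sqrt
  nlinarith [sq_nonneg ((a.2 : ℝ) - b.2)]

lemma euclid_coord2 (a b : V) : |((a.2 : ℝ) - b.2)| ≤ euclid a b := by
  rw [← Real.sqrt_sq_eq_abs]
  apply Real.sqrt_le_sqrt
  nlinarith [sq_nonneg ((a.1 : ℝ) - b.1)]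

lemma list_bounded : ∀ p : List V, ∃ m : ℕ, ∀ x ∈ p, x.1.natAbs ≤ m ∧ x.2.natAbs ≤ m
  | [] => ⟨0, by simp⟩
  | a :: l => by
    obtain ⟨m, hm⟩ := list_bounded l
    refine ⟨max m (max a.1.natAbs a.2.natAbs), ?_⟩
    intro x hx
    rcases List.mem_cons.1 hx with rfl | hx'
    · constructor <;> omega
    · have := hm x hx'
      constructor <;> omega

/- ### finiteness of nodup lists in a finite set -/
lemma nodup_lists_finite (R : Set V) (hR : R.Finite) :
    {p : List V | p.Nodup ∧ ∀ x ∈ p, x ∈ R}.Finite := by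
  haveI : Fintype ↥R := hR.fintype
  have hfin : {l : List ↥R | l.length ≤ Fintype.card ↥R}.Finite :=
    List.finite_length_le ↥R (Fintype.card ↥R)
  apply Set.Finite.subset (hfin.image (List.map Subtype.val))
  rintro p ⟨hnd, hmem⟩
  refine ⟨p.attachWith _ hmem, ?_, ?_⟩
  · have hmap : List.map Subtype.val (p.attachWith _ hmem) = p := by
      simpa using List.attachWith_map_subtype_val hmem
    have : (p.attachWith _ hmem).Nodup := by
      apply List.Nodup.of_map Subtype.val
      rw [hmap]; exact hnd
    simpa [List.length_attachWith] using this.length_le_card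
  · simpa using List.attachWith_map_subtype_val hmem

lemma euclid_symm (u v : V) : euclid u v = euclid v u := by
  unfold euclid; congr 1; ring

lemma gridDist_eq_univ (w : V → V → ℝ) (u v : V) :
    gridDist w u v = gridDistOn Set.univ w u v := by
  unfold gridDist gridDistOn
  congr 1
  ext c
  constructor
  · rintro ⟨p, hp, rfl⟩; exact ⟨p, hp, fun _ _ => trivial, rfl⟩
  · rintro ⟨p, hp, _, rfl⟩; exact ⟨p, hp, rfl⟩

def sh (n : ℕ) : V := ((n : ℤ) / 2, (n : ℤ) / 2)

lemma mem_box_shift (a : V) (n : ℕ) (h1 : 2 * a.1.natAbs + 2 ≤ n)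
    (h2 : 2 * a.2.natAbs + 2 ≤ n) : a + sh n ∈ box n := by
  simp only [box, sh, Set.mem_setOf_eq, Prod.fst_add, Prod.snd_add]
  omega

lemma rect_sub_box {n : ℕ} {a b : V} (ha : a ∈ box n) (hb : b ∈ box n) {x : V}
    (hx : inRect a b x) : x ∈ box n := by
  simp only [box, Set.mem_setOf_eq, inRect] at *
  omega

theorem stmt13 (C : ℝ) (hC : 1 ≤ C)
    (h : ∀ n : ℕ, 3 ≤ n →
      ∃ W : V → V → ℝ,
        (∀ u v, W u v = W v u) ∧ (∀ u v, 0 ≤ W u v) ∧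
        ∀ u v : V, u ∈ box n → v ∈ box n →
          euclid u v - 1 ≤ gridDistOn (box n) W u v ∧
          gridDistOn (box n) W u v ≤
            euclid u v + C * (1 + euclid u v ^ ((8 : ℝ) / 9))) :
    ∃ C' : ℝ, 0 < C' ∧
      ∃ W : V → V → ℝ,
        (∀ u v, W u v = W v u) ∧ (∀ u v, 0 ≤ W u v) ∧
        ∀ u v : V,
          euclid u v - 1 ≤ gridDist W u v ∧
          gridDist W u v ≤ euclid u v + C' * (1 + euclid u v ^ ((8 : ℝ) / 9)) := by
  classical
  -- the chosen finite-grid weights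
  set WW : ℕ → V → V → ℝ := fun n => if hn : 3 ≤ n then (h n hn).choose else fun _ _ => 0
    with hWWdef
  have hWsym : ∀ n a b, WW n a b = WW n b a := by
    intro n a b
    by_cases hn : 3 ≤ n
    · simp only [hWWdef, dif_pos hn]; exact (h n hn).choose_spec.1 a b
    · simp only [hWWdef, dif_neg hn]
  have hWnn : ∀ n a b, 0 ≤ WW n a b := by
    intro n a b
    by_cases hn : 3 ≤ n
    · simp only [hWWdef, dif_pos hn]; exact (h n hn).choose_spec.2.1 a b
    · simp only [hWWdef, dif_neg hn]; exact le_rfl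
  have hWbd : ∀ n, 3 ≤ n → ∀ a b : V, a ∈ box n → b ∈ box n →
      euclid a b - 1 ≤ gridDistOn (box n) (WW n) a b ∧
      gridDistOn (box n) (WW n) a b ≤ euclid a b + C * (1 + euclid a b ^ ((8 : ℝ) / 9)) := by
    intro n hn a b ha hb
    simp only [hWWdef, dif_pos hn]
    exact (h n hn).choose_spec.2.2 a b ha hb
  -- the shifted distance functions
  set g : V → V → ℕ → ℝ :=
    fun a b n => gridDistOn (box n) (WW n) (a + sh n) (b + sh n) with hgdef
  have hgsym : ∀ a b n, g a b n = g b a n := fun a b n =>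
    gridDistOn_symm (hWsym n) _ _
  have hgnn : ∀ a b n, 0 ≤ g a b n := fun a b n => gridDistOn_nonneg (hWnn n) _ _
  -- eventual upper bound on g
  have hgev : ∀ a b : V, ∀ᶠ n in (Filter.atTop : Filter ℕ),
      g a b n ≤ euclid a b + C * (1 + euclid a b ^ ((8 : ℝ) / 9)) := by
    intro a b
    filter_upwards [Filter.eventually_ge_atTop
      (2 * (a.1.natAbs + a.2.natAbs + b.1.natAbs + b.2.natAbs) + 3)] with n hn
    have hn3 : 3 ≤ n := by omega
    have ha : a + sh n ∈ box n := mem_box_shift a n (by omega) (by omega)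
    have hb : b + sh n ∈ box n := mem_box_shift b n (by omega) (by omega)
    have := (hWbd n hn3 _ _ ha hb).2
    rwa [euclid_shift] at this
  -- an ultrafilter extending atTop
  obtain ⟨F, hF⟩ := Ultrafilter.exists_le (Filter.atTop : Filter ℕ)
  -- the limit weights
  have hlim : ∀ a b : V, ∃ L : ℝ, 0 ≤ L ∧ Filter.Tendsto (g a b) F (nhds L) := by
    intro a b
    set M := euclid a b + C * (1 + euclid a b ^ ((8 : ℝ) / 9)) with hM
    have hIcc : Set.Icc (0:ℝ) M ∈ Filter.map (g a b) F := by
      apply Filter.mem_map.2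
      apply hF
      filter_upwards [hgev a b] with n hn
      exact ⟨hgnn a b n, hn⟩
    obtain ⟨L, hL, hle⟩ := (isCompact_Icc (a := (0:ℝ)) (b := M)).ultrafilter_le_nhds
      (Ultrafilter.map (g a b) F) (by rwa [Ultrafilter.coe_map, Filter.le_principal_iff])
    exact ⟨L, hL.1, by rwa [Ultrafilter.coe_map] at hle⟩
  choose W hWnn' hWlim using hlim
  -- limits of walk weights
  have hwlim : ∀ p : List V,
      Filter.Tendsto (fun n => wgt (fun a b => g a b n) p) F (nhds (wgt W p)) := by
    intro p
    induction p with
    | nil => simpa [wgt] using tendsto_const_nhds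
    | cons a l ih =>
      cases l with
      | nil => simpa [wgt] using tendsto_const_nhds
      | cons b l' =>
        simp only [wgt]
        exact (hWlim a b).add ih
  -- conclusion
  refine ⟨C + 1, by linarith, W, ?_, hWnn', ?_⟩
  · intro a b
    have e : g a b = g b a := funext (hgsym a b)
    exact tendsto_nhds_unique (hWlim a b) (e ▸ hWlim b a)
  intro u v
  constructor
  · -- lower bound
    rw [gridDist_eq_univ, gridDistOn_eq]
    apply le_csInf
    · obtain ⟨p, hp, -⟩ := exists_walk_rect u v
      exact ⟨walkWeight W p, p, hp, fun _ _ => trivial, rfl⟩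
    · rintro c ⟨p, hp, -, rfl⟩
      rw [walkWeight_eq_wgt]
      apply ge_of_tendsto (hwlim p)
      obtain ⟨m, hm⟩ := list_bounded p
      apply hF
      filter_upwards [Filter.eventually_ge_atTop (2*m + 3)] with n hn
      have hmem : ∀ x ∈ p, x + sh n ∈ box n := fun x hx =>
        mem_box_shift x n (by have := hm x hx; omega) (by have := hm x hx; omega)
      have hu : u ∈ p := List.mem_of_mem_head? (by rw [hp.2.1]; rfl)
      have hv : v ∈ p := List.mem_of_mem_getLast? (by rw [hp.2.2]; rfl)
      have hmap := wgt_map (gridDistOn (box n) (WW n)) (· + sh n) p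
      have hwalk := hp.shift (sh n)
      have hchain := gridDistOn_chain (S := box n) (hWnn n) (p.map (· + sh n)) _ _ hwalk
        (by intro x hx; obtain ⟨y, hy, rfl⟩ := List.mem_map.1 hx; exact hmem y hy)
      have hlow := (hWbd n (by omega) _ _ (hmem u hu) (hmem v hv)).1
      rw [euclid_shift] at hlow
      simp only [hgdef]
      rw [← hmap]
      linarith
  · -- upper bound
    obtain ⟨E, hE⟩ : ∃ E : ℝ, E = euclid u v := ⟨_, rfl⟩
    have hE0 : 0 ≤ E := hE ▸ euclid_nonneg u v
    have hrp : 0 ≤ E ^ ((8:ℝ)/9) := Real.rpow_nonneg hE0 _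
    obtain ⟨B, hB⟩ : ∃ B : ℝ, B = E + C * (1 + E ^ ((8:ℝ)/9)) := ⟨_, rfl⟩
    have hEB : E ≤ B := by
      have h9 := mul_nonneg (by linarith : (0:ℝ) ≤ C) (by linarith : (0:ℝ) ≤ 1 + E ^ ((8:ℝ)/9))
      linarith
    have hB0 : 0 ≤ B := le_trans hE0 hEB
    obtain ⟨K, hK⟩ : ∃ K : ℤ, K = ⌈B⌉ + 4 := ⟨_, rfl⟩
    have hBK : B + 3 < (K : ℝ) := by
      have := Int.le_ceil B
      push_cast [hK]
      linarith
    have hK0 : 0 ≤ K := by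
      have : (0:ℝ) ≤ (K:ℝ) := by linarith
      exact_mod_cast this
    obtain ⟨R, hR⟩ : ∃ R : Set V,
        R = Set.Icc ((u.1 - K, u.2 - K) : V) ((u.1 + K, u.2 + K) : V) := ⟨_, rfl⟩
    have hRmem : ∀ x : V, x ∈ R ↔
        (u.1 - K ≤ x.1 ∧ x.1 ≤ u.1 + K ∧ u.2 - K ≤ x.2 ∧ x.2 ≤ u.2 + K) := by
      intro x
      simp [hR, Set.mem_Icc, Prod.le_def]
      tauto
    have hRfin : R.Finite := hR ▸ Set.finite_Icc _ _
    -- points close to u in euclidean distance are in R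
    have hclose : ∀ y : V, euclid u y < B + 3 → y ∈ R := by
      intro y hy
      have h1 : |((y.1:ℝ) - u.1)| ≤ euclid u y := by
        rw [show ((y.1:ℝ) - u.1) = -((u.1:ℝ) - y.1) by ring, abs_neg]
        exact euclid_coord1 u y
      have h2 : |((y.2:ℝ) - u.2)| ≤ euclid u y := by
        rw [show ((y.2:ℝ) - u.2) = -((u.2:ℝ) - y.2) by ring, abs_neg]
        exact euclid_coord2 u y
      have h1' : |y.1 - u.1| ≤ K := by
        have : ((|y.1 - u.1| : ℤ) : ℝ) ≤ (K:ℝ) := by push_cast; linarith [abs_le.1 h1]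
        exact_mod_cast this
      have h2' : |y.2 - u.2| ≤ K := by
        have : ((|y.2 - u.2| : ℤ) : ℝ) ≤ (K:ℝ) := by push_cast; linarith [abs_le.1 h2]
        exact_mod_cast this
      rw [hRmem]
      obtain ⟨ha1, ha2⟩ := abs_le.1 h1'
      obtain ⟨hb1, hb2⟩ := abs_le.1 h2'
      omega
    have huR : u ∈ R := by rw [hRmem]; omega
    have hvR : v ∈ R := by
      apply hclose
      rw [← hE]
      linarith
    -- the finite set of candidate paths
    obtain ⟨P, hP⟩ : ∃ P : Set (List V),
        P = {p | IsWalk u v p ∧ p.Nodup ∧ ∀ x ∈ p, x ∈ R} := ⟨_, rfl⟩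
    have hPfin : P.Finite := by
      apply Set.Finite.subset (nodup_lists_finite R hRfin)
      rw [hP]
      rintro p ⟨-, hnd, hmem⟩
      exact ⟨hnd, hmem⟩
    -- key claim: for large n, some path in P is short for g
    have hmain : ∃ p ∈ P, {n | wgt (fun a b => g a b n) p ≤ B + 1/2} ∈ F := by
      -- bound on coordinates of R
      obtain ⟨N, hN⟩ : ∃ N : ℕ, N = 2 * (u.1.natAbs + u.2.natAbs + K.natAbs) + 3 := ⟨_, rfl⟩
      have hRN : ∀ x ∈ R, ∀ n : ℕ, N ≤ n → x + sh n ∈ box n := by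
        intro x hx n hn
        rw [hRmem] at hx
        exact mem_box_shift x n (by omega) (by omega)
      have hsub : {n | N ≤ n} ⊆ ⋃ p ∈ P, {n | wgt (fun a b => g a b n) p ≤ B + 1/2} := by
        intro n hn
        simp only [Set.mem_setOf_eq] at hn
        have hn3 : 3 ≤ n := by omega
        have huB : u + sh n ∈ box n := hRN u huR n hn
        have hvB : v + sh n ∈ box n := hRN v hvR n hn
        -- a walk between shifted points inside the box
        have hne : (wset (box n) (WW n) (u + sh n) (v + sh n)).Nonempty := by
          obtain ⟨q, hq, hqr⟩ := exists_walk_rect (u + sh n) (v + sh n)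
          exact ⟨walkWeight (WW n) q, q, hq, fun x hx => rect_sub_box huB hvB (hqr x hx), rfl⟩
        have hdB : gridDistOn (box n) (WW n) (u + sh n) (v + sh n) ≤ B := by
          have := (hWbd n hn3 _ _ huB hvB).2
          rw [euclid_shift] at this
          rw [hB, hE]
          exact this
        obtain ⟨c, hcmem, hclt⟩ := exists_lt_of_csInf_lt hne
          (lt_of_le_of_lt hdB (by linarith : B < B + 1/4))
        obtain ⟨q, hq, hqbox, rfl⟩ := hcmem
        rw [walkWeight_eq_wgt] at hclt
        -- loop-erase
        obtain ⟨q', hq', hq'nd, hq'mem, hq'w⟩ :=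
          loop_erase (hWnn n) q.length q _ _ le_rfl hq
        have hq'box : ∀ x ∈ q', x ∈ box n := fun x hx => hqbox x (hq'mem x hx)
        have hq'w2 : wgt (WW n) q' < B + 1/4 := lt_of_le_of_lt hq'w hclt
        -- vertices of q' are near u
        have hq'R : ∀ x ∈ q', x - sh n ∈ R := by
          intro x hx
          apply hclose
          have hxq : x ∈ q := hq'mem x hx
          obtain ⟨q1, q2, rfl⟩ := List.append_of_mem hxq
          have hsplit := walk_split hq
          have hw1 : gridDistOn (box n) (WW n) (u + sh n) x ≤ wgt (WW n) (q1 ++ [x]) :=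
            gridDistOn_le (hWnn n) hsplit.1
              (fun y hy => hqbox y (by
                rcases List.mem_append.1 hy with h' | h'
                · exact List.mem_append.2 (Or.inl h')
                · simp at h'; subst h'; exact List.mem_append.2 (Or.inr (by simp))))
          have hw2 : gridDistOn (box n) (WW n) x (v + sh n) ≤ wgt (WW n) (x :: q2) :=
            gridDistOn_le (hWnn n) hsplit.2
              (fun y hy => hqbox y (List.mem_append.2 (Or.inr hy)))
          have hlow1 := (hWbd n hn3 _ _ huB (hqbox x (by simp))).1
          have hlow2 := (hWbd n hn3 _ _ (hqbox x (by simp)) hvB).1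
          have hsum : wgt (WW n) (q1 ++ x :: q2)
              = wgt (WW n) (q1 ++ [x]) + wgt (WW n) (x :: q2) := wgt_split
          have hqlt : wgt (WW n) (q1 ++ x :: q2) < B + 1/4 := hclt
          have he2 : 0 ≤ euclid x (v + sh n) := euclid_nonneg _ _
          have hshx : euclid (u + sh n) x = euclid u (x - sh n) := by
            rw [show x = (x - sh n) + sh n by ring, euclid_shift]
            ring_nf
          have h4 : euclid (u + sh n) x - 1 ≤ wgt (WW n) (q1 ++ [x]) := le_trans hlow1 hw1
          have h5 : euclid x (v + sh n) - 1 ≤ wgt (WW n) (x :: q2) := le_trans hlow2 hw2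
          rw [← hshx]
          linarith [h4, h5, hsum, hqlt, he2]
        -- the pulled-back path
        obtain ⟨p, hp⟩ : ∃ p : List V, p = q'.map (· + (-(sh n))) := ⟨_, rfl⟩
        have hpq : p.map (· + sh n) = q' := by
          rw [hp, List.map_map]
          have : ((· + sh n) ∘ (· + (-(sh n)))) = (id : V → V) := by
            funext x; simp
          rw [this, List.map_id]
        have hpwalk : IsWalk u v p := by
          rw [hp]
          have := hq'.shift (-(sh n))
          rwa [show u + sh n + -sh n = u by ring, show v + sh n + -sh n = v by ring] at this
        have hpnd : p.Nodup := hp ▸ hq'nd.map (add_left_injective _)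
        have hpR : ∀ x ∈ p, x ∈ R := by
          intro x hx
          rw [hp] at hx
          obtain ⟨y, hy, rfl⟩ := List.mem_map.1 hx
          have := hq'R y hy
          rwa [show y + -sh n = y - sh n by ring]
        have hpmem : p ∈ P := by rw [hP]; exact ⟨hpwalk, hpnd, hpR⟩
        refine Set.mem_biUnion hpmem ?_
        simp only [Set.mem_setOf_eq, hgdef]
        rw [← wgt_map (gridDistOn (box n) (WW n)) (· + sh n) p, hpq]
        have hmono : wgt (fun a b => gridDistOn (box n) (WW n) a b) q' ≤ wgt (WW n) q' := by
          apply wgt_mono (S := box n) ?_ q' hq'.1 hq'box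
          intro a b ha hb hab
          have hwalkab : IsWalk a b [a, b] := ⟨by simp [List.Chain', List.isChain_cons_cons, hab], rfl, rfl⟩
          have := gridDistOn_le (S := box n) (hWnn n) hwalkab
            (fun y hy => by
              rcases List.mem_cons.1 hy with rfl | hy'
              · exact ha
              · simp at hy'; subst hy'; exact hb)
          simpa [wgt] using this
        linarith
      have hUnion : (⋃ p ∈ P, {n | wgt (fun a b => g a b n) p ≤ B + 1/2}) ∈ F :=
        Filter.mem_of_superset (hF (Filter.eventually_ge_atTop N)) hsub
      exact ((Ultrafilter.finite_biUnion_mem_iff hPfin).1 hUnion)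
    obtain ⟨p, hpP, hpF⟩ := hmain
    rw [hP] at hpP
    have hfinal : wgt W p ≤ B + 1/2 :=
      le_of_tendsto (hwlim p) hpF
    have hdist : gridDist W u v ≤ wgt W p := by
      rw [gridDist_eq_univ, gridDistOn_eq]
      exact csInf_le (wset_bddBelow hWnn' u v) ⟨p, hpP.1, fun _ _ => trivial,
        (walkWeight_eq_wgt W p).symm⟩
    calc gridDist W u v ≤ B + 1/2 := le_trans hdist hfinal
      _ ≤ E + (C+1) * (1 + E ^ ((8:ℝ)/9)) := by rw [hB]; linarith [hrp]
      _ = euclid u v + (C+1) * (1 + euclid u v ^ ((8:ℝ)/9)) := by rw [hE]
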